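/- For D = -1/3 and all (u,w) with 0 < u < 1 and w < 0, the system u(1-u)^{-2/3} + w(1-w)^{-2/3} = 0 and F₂(u,w) = 0 has no solutions, where F₂(u,w) = (1-u)(1 - (2/3)u - (1/9)u²)/(u(1-u/3)³) + (1-w)(1 - (2/3)w - (1/9)w²)/(w(1-w/3)³). -/

import Mathlib

open Real
set_option maxHeartbeats 1000000
set_option maxRecDepth 8000

/-- For `D = -1/3` the curves `F₁ = 0` and `F₂ = 0` do not intersect for
`0 < u < 1`, `w < 0`. -/
theorem stmt_16 :
    ∀ u w : ℝ, 0 < u → u < 1 → w < 0 →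
      ¬ (u * (1-u) ^ (-(2:ℝ)/3) + w * (1-w) ^ (-(2:ℝ)/3) = 0 ∧
        (1-u) * (1 - (2/3)*u - (1/9)*u^2) / (u * (1 - u/3)^3)
          + (1-w) * (1 - (2/3)*w - (1/9)*w^2) / (w * (1 - w/3)^3) = 0) := by
  rintro u w hu hu1 hw ⟨h1, h2⟩
  have ha : (0:ℝ) < 1 - u := by linarith
  have hb : (0:ℝ) < 1 - w := by linarith
  have hnw : (0:ℝ) < -w := by linarith
  -- Step 1: polynomial form of F₁ = 0
  have hA3 : ((1-u) ^ (-(2:ℝ)/3))^3 = ((1-u)^2)⁻¹ := by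
    rw [← rpow_natCast ((1-u) ^ (-(2:ℝ)/3)) 3, ← rpow_mul ha.le]
    norm_num
  have hB3 : ((1-w) ^ (-(2:ℝ)/3))^3 = ((1-w)^2)⁻¹ := by
    rw [← rpow_natCast ((1-w) ^ (-(2:ℝ)/3)) 3, ← rpow_mul hb.le]
    norm_num
  have h1' : u * (1-u) ^ (-(2:ℝ)/3) = -(w * (1-w) ^ (-(2:ℝ)/3)) := by linarith
  have h3 : (u * (1-u) ^ (-(2:ℝ)/3))^3 = (-(w * (1-w) ^ (-(2:ℝ)/3)))^3 := by rw [h1']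
  have h4 : u^3 * ((1-u)^2)⁻¹ = -(w^3 * ((1-w)^2)⁻¹) := by
    rw [← hA3, ← hB3]; ring_nf; ring_nf at h3; linarith
  have hane : ((1-u)^2) ≠ 0 := by positivity
  have hbne : ((1-w)^2) ≠ 0 := by positivity
  have hP : u^3 * (1-w)^2 + w^3 * (1-u)^2 = 0 := by
    field_simp at h4; linarith
  -- Step 2: polynomial form of F₂ = 0
  have h3u : (3:ℝ) - u ≠ 0 := by linarith
  have h3w : (3:ℝ) - w ≠ 0 := by linarith
  field_simp [hu.ne', hw.ne, h3u, h3w] at h2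
  -- Step 3: parametrization
  set m : ℝ := (u*(1-w))/((-w)*(1-u)) with hmdef
  have hm0 : 0 < m := by positivity
  have e1 : (-w)*(1-u) ≠ 0 := by positivity
  have hm2 : m^2 * u = -w := by
    rw [hmdef, div_pow, div_mul_eq_mul_div, div_eq_iff (pow_ne_zero 2 e1)]
    linear_combination hP
  have hm3 : m^3 * (1-u) = 1-w := by
    rw [hmdef, div_pow, div_mul_eq_mul_div, div_eq_iff (pow_ne_zero 3 e1)]
    linear_combination ((1-u)*(1-w))*hP
  clear hmdef
  clear_value m
  have hmu : u * (m^3 + m^2) = m^3 - 1 := by linarith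
  have hA0 : (0:ℝ) < m^3 + m^2 := add_pos (pow_pos hm0 3) (pow_pos hm0 2)
  have h5 : 0 < m^3 - 1 := by have := mul_pos hu hA0; linarith
  have hm1 : 1 < m := by
    by_contra hc
    push_neg at hc
    have : m^3 ≤ 1 := pow_le_one₀ hm0.le hc
    linarith
  have hden : m^3 + m^2 ≠ 0 := ne_of_gt hA0
  have hu' : u = (m^3 - 1)/(m^3 + m^2) := by
    rw [eq_div_iff hden]; linarith
  have hw' : w = -(m^2 * ((m^3 - 1)/(m^3 + m^2))) := by
    rw [← hu']; linarith
  rw [hu', hw'] at h2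
  field_simp at h2
  have hx : (0:ℝ) < m - 1 := by linarith
  have key : (2*m^1 + 22*m^2 + 85*m^3 + 217*m^4 + 167*m^5 - 42*m^6 - 444*m^7 - 852*m^8 - 678*m^9 + 20*m^10 + 868*m^11 + 1270*m^12 + 868*m^13 + 20*m^14 - 678*m^15 - 852*m^16 - 444*m^17 - 42*m^18 + 167*m^19 + 217*m^20 + 85*m^21 + 22*m^22 + 2*m^23) * (m^24 * (m+1)^8) = 0 := by
    linear_combination (m^24 * (1 + 8*m + 28*m^2 + 55*m^3 + 62*m^4 + 28*m^5 - 28*m^6 - 62*m^7 - 55*m^8 - 28*m^9 - 8*m^10 - m^11) / 27) * h2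
  have hfac : (0:ℝ) < m^24 * (m+1)^8 := by positivity
  have hG : (2*m^1 + 22*m^2 + 85*m^3 + 217*m^4 + 167*m^5 - 42*m^6 - 444*m^7 - 852*m^8 - 678*m^9 + 20*m^10 + 868*m^11 + 1270*m^12 + 868*m^13 + 20*m^14 - 678*m^15 - 852*m^16 - 444*m^17 - 42*m^18 + 167*m^19 + 217*m^20 + 85*m^21 + 22*m^22 + 2*m^23) = 0 := by
    rcases mul_eq_zero.1 key with h | h
    · exact h
    · exact absurd h (ne_of_gt hfac)
  linarith [hG, pow_pos hx 4, pow_pos hx 5, pow_pos hx 6, pow_pos hx 7, pow_pos hx 8,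
    pow_pos hx 9, pow_pos hx 10, pow_pos hx 11, pow_pos hx 12, pow_pos hx 13,
    pow_pos hx 14, pow_pos hx 15, pow_pos hx 16, pow_pos hx 17, pow_pos hx 18,
    pow_pos hx 19, pow_pos hx 20, pow_pos hx 21, pow_pos hx 22, pow_pos hx 23]
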